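/- Let n ≥ q ≥ 1 be integers, t > 0, and let f : ℝ^q → ℂ be continuous and rapidly decreasing on the positive orthant, i.e. for every N ∈ ℕ there is C_N ≥ 0 with |f(u)| ≤ C_N·(1+‖u‖)^{−N} whenever all coordinates of u are ≥ 0. Then t^{2q}·∫_{S_n} f(t²σ₁, …, t²σ_q) dσ = (1/(n−q)!)·∫_{T(t²)} (1 − t^{−2}(u₁+⋯+u_q))^{n−q}·f(u) du, where T(c) = {u ∈ ℝ^q : u_j ≥ 0, u₁+⋯+u_q ≤ c}. -/

import Mathlib

open MeasureTheory Pointwise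

namespace Stmt7Aux

def S (k : ℕ) (c : ℝ) : Set (Fin k → ℝ) := {u | (∀ j, 0 ≤ u j) ∧ ∑ j, u j ≤ c}

lemma isClosed_S (k : ℕ) (c : ℝ) : IsClosed (S k c) := by
  have : S k c = (⋂ j, {u : Fin k → ℝ | 0 ≤ u j}) ∩ {u : Fin k → ℝ | ∑ j, u j ≤ c} := by
    ext u; simp [S, Set.mem_iInter]
  rw [this]
  exact (isClosed_iInter fun j => isClosed_le continuous_const (continuous_apply j)).inter
    (isClosed_le (continuous_finset_sum _ fun i _ => continuous_apply i) continuous_const)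

lemma measurableSet_S (k : ℕ) (c : ℝ) : MeasurableSet (S k c) :=
  (isClosed_S k c).measurableSet

lemma isCompact_S (k : ℕ) (c : ℝ) : IsCompact (S k c) := by
  refine IsCompact.of_isClosed_subset (isCompact_Icc (a := (0 : Fin k → ℝ))
    (b := fun _ => c)) (isClosed_S k c) ?_
  rintro u ⟨h0, hs⟩
  refine ⟨fun j => h0 j, fun j => ?_⟩
  calc u j ≤ ∑ i, u i := Finset.single_le_sum (fun i _ => h0 i) (Finset.mem_univ j)
  _ ≤ c := hs

lemma S_empty {k : ℕ} {c : ℝ} (hc : c < 0) : S k c = ∅ := by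
  ext u
  simp only [S, Set.mem_setOf_eq, Set.mem_empty_iff_false, iff_false, not_and]
  intro h0
  have : (0:ℝ) ≤ ∑ j, u j := Finset.sum_nonneg fun j _ => h0 j
  linarith

lemma volume_S : ∀ (k : ℕ) {c : ℝ}, 0 ≤ c →
    volume (S k c) = ENNReal.ofReal (c ^ k / k.factorial)
  | 0, c, hc => by
    have h : S 0 c = Set.univ := by
      ext u
      simp [S, hc]
    rw [h]
    simp [volume_pi, Measure.pi_univ]
  | (k+1), c, hc => by
    have hmp := volume_preserving_piFinSuccAbove (fun _ : Fin (k+1) => ℝ) 0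
    set e := MeasurableEquiv.piFinSuccAbove (fun _ : Fin (k+1) => ℝ) 0 with he
    set T : Set (ℝ × (Fin k → ℝ)) :=
      {p | 0 ≤ p.1 ∧ (∀ j, 0 ≤ p.2 j) ∧ ∑ j, p.2 j ≤ c - p.1} with hT
    have hpre : e ⁻¹' T = S (k+1) c := by
      ext u
      simp only [Set.mem_preimage, hT, Set.mem_setOf_eq, he,
        MeasurableEquiv.piFinSuccAbove_apply, S, Fin.forall_fin_succ, Fin.sum_univ_succ, Fin.insertNthEquiv_zero, Fin.consEquiv_symm_apply, Fin.tail]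
      constructor
      · rintro ⟨h1, h2, h3⟩
        exact ⟨⟨h1, h2⟩, by linarith⟩
      · rintro ⟨⟨h1, h2⟩, h3⟩
        exact ⟨h1, h2, by linarith⟩
    have hTmeas : MeasurableSet T := by
      have hcl : IsClosed T := by
        have h1 : IsClosed {p : ℝ × (Fin k → ℝ) | 0 ≤ p.1} :=
          isClosed_le continuous_const continuous_fst
        have h2 : IsClosed (⋂ j, {p : ℝ × (Fin k → ℝ) | 0 ≤ p.2 j}) :=
          isClosed_iInter fun j => isClosed_le continuous_const
            ((continuous_apply j).comp continuous_snd)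
        have h3 : IsClosed {p : ℝ × (Fin k → ℝ) | ∑ j, p.2 j ≤ c - p.1} :=
          isClosed_le (continuous_finset_sum _ fun i _ => (continuous_apply i).comp
            continuous_snd) (continuous_const.sub continuous_fst)
        have hsplit : T = {p : ℝ × (Fin k → ℝ) | 0 ≤ p.1} ∩
            ((⋂ j, {p : ℝ × (Fin k → ℝ) | 0 ≤ p.2 j}) ∩
              {p : ℝ × (Fin k → ℝ) | ∑ j, p.2 j ≤ c - p.1}) := by
          ext p; simp [hT, Set.mem_iInter]
        rw [hsplit]; exact h1.inter (h2.inter h3)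
      exact hcl.measurableSet
    have h2 : volume (S (k+1) c) = ∫⁻ x : ℝ, volume (Prod.mk x ⁻¹' T) := by
      rw [← hpre, hmp.measure_preimage hTmeas.nullMeasurableSet, Measure.volume_eq_prod,
        Measure.prod_apply hTmeas]
    have hfib : ∀ x : ℝ, volume (Prod.mk x ⁻¹' T)
        = Set.indicator (Set.Icc 0 c)
            (fun x => ENNReal.ofReal ((c - x) ^ k / k.factorial)) x := by
      intro x
      by_cases hx : 0 ≤ x
      · have hQ : Prod.mk x ⁻¹' T = S k (c - x) := by
          ext y; simp [hT, S, hx]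
        rw [hQ]
        by_cases hxc : x ≤ c
        · rw [volume_S k (by linarith), Set.indicator_of_mem (Set.mem_Icc.mpr ⟨hx, hxc⟩) _]
        · rw [S_empty (by linarith),
            Set.indicator_of_notMem (by simp [hxc] : x ∉ Set.Icc 0 c)]
          simp
      · have hQ : Prod.mk x ⁻¹' T = ∅ := by
          ext y; simp [hT, hx]
        rw [hQ, Set.indicator_of_notMem (by simp [hx] : x ∉ Set.Icc 0 c)]
        simp
    simp_rw [h2, hfib]
    rw [lintegral_indicator measurableSet_Icc,
      ← ofReal_integral_eq_lintegral_ofReal ?_ ?_]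
    · congr 1
      rw [MeasureTheory.integral_Icc_eq_integral_Ioc,
        ← intervalIntegral.integral_of_le hc, intervalIntegral.integral_div,
        intervalIntegral.integral_comp_sub_left (fun u => u ^ k) c]
      simp only [sub_zero, sub_self]
      rw [integral_pow]
      rw [Nat.factorial_succ]
      push_cast
      field_simp
      simp
    · exact (Continuous.integrableOn_Icc (by fun_prop))
    · exact ae_restrict_of_forall_mem measurableSet_Icc fun x hx =>
        div_nonneg (pow_nonneg (by linarith [hx.2]) _) (by positivity)

lemma stepA (q m : ℕ) (hqn : q ≤ q + m) (R : ℝ)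
    (f : (Fin q → ℝ) → ℂ) (hf : Continuous f) :
    ∫ σ in S (q+m) 1, f (fun j => R * σ (Fin.castLE hqn j))
      = ∫ x in S q 1,
          (((1 - ∑ j, x j) ^ m / m.factorial : ℝ)) • f (fun j => R * x j) := by
  classical
  set e : ((Fin q → ℝ) × (Fin m → ℝ)) ≃ᵐ (Fin (q+m) → ℝ) :=
    (MeasurableEquiv.sumPiEquivProdPi (fun _ : Fin q ⊕ Fin m => ℝ)).symm.trans
      (MeasurableEquiv.piCongrLeft (fun _ => ℝ) finSumFinEquiv) with he
  have hmp : MeasurePreserving e volume volume := by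
    rw [he, MeasurableEquiv.coe_trans]
    exact (volume_measurePreserving_piCongrLeft _ finSumFinEquiv).comp
      (volume_measurePreserving_sumPiEquivProdPi_symm _)
  have he1 : ∀ (p : (Fin q → ℝ) × (Fin m → ℝ)) (s : Fin q ⊕ Fin m),
      e p (finSumFinEquiv s) = Sum.elim p.1 p.2 s := by
    intro p s
    rw [he]
    have := MeasurableEquiv.piCongrLeft_apply_apply finSumFinEquiv
      (β := fun _ : Fin (q+m) => ℝ)
      ((MeasurableEquiv.sumPiEquivProdPi (fun _ : Fin q ⊕ Fin m => ℝ)).symm p) s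
    rw [MeasurableEquiv.trans_apply, this]
    cases s <;> rfl
  have hsum : ∀ p : (Fin q → ℝ) × (Fin m → ℝ),
      ∑ i, e p i = ∑ j, p.1 j + ∑ j, p.2 j := by
    intro p
    rw [← Equiv.sum_comp finSumFinEquiv (fun i => e p i)]
    simp_rw [he1]
    rw [Fintype.sum_sum_type]
    rfl
  have hpos : ∀ p : (Fin q → ℝ) × (Fin m → ℝ),
      (∀ i, 0 ≤ e p i) ↔ ((∀ j, 0 ≤ p.1 j) ∧ ∀ j, 0 ≤ p.2 j) := by
    intro p
    constructor
    · intro h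
      refine ⟨fun j => ?_, fun j => ?_⟩
      · have h' := h (finSumFinEquiv (Sum.inl j)); rwa [he1 p (Sum.inl j)] at h'
      · have h' := h (finSumFinEquiv (Sum.inr j)); rwa [he1 p (Sum.inr j)] at h'
    · rintro ⟨h1, h2⟩ i
      obtain ⟨s, rfl⟩ := finSumFinEquiv.surjective i
      rw [he1 p s]
      cases s with
      | inl j => exact h1 j
      | inr j => exact h2 j
  set P : Set ((Fin q → ℝ) × (Fin m → ℝ)) :=
    {p | (∀ j, 0 ≤ p.1 j) ∧ (∀ j, 0 ≤ p.2 j) ∧ ∑ j, p.1 j + ∑ j, p.2 j ≤ 1} with hP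
  have hpre : e ⁻¹' (S (q+m) 1) = P := by
    ext p
    simp only [Set.mem_preimage, S, Set.mem_setOf_eq, hP, hsum p, hpos p]
    tauto
  have hcast : ∀ (p : (Fin q → ℝ) × (Fin m → ℝ)) (j : Fin q),
      e p (Fin.castLE hqn j) = p.1 j := fun p j => he1 p (Sum.inl j)
  have hPclosed : IsClosed P := by
    have h1 : IsClosed {p : (Fin q → ℝ) × (Fin m → ℝ) | ∀ j, 0 ≤ p.1 j} := by
      have hs : {p : (Fin q → ℝ) × (Fin m → ℝ) | ∀ j, 0 ≤ p.1 j}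
          = ⋂ j, {p : (Fin q → ℝ) × (Fin m → ℝ) | 0 ≤ p.1 j} := by
        ext p; simp [Set.mem_iInter]
      rw [hs]
      exact isClosed_iInter fun j => isClosed_le continuous_const
        ((continuous_apply j).comp continuous_fst)
    have h2 : IsClosed {p : (Fin q → ℝ) × (Fin m → ℝ) | ∀ j, 0 ≤ p.2 j} := by
      have hs : {p : (Fin q → ℝ) × (Fin m → ℝ) | ∀ j, 0 ≤ p.2 j}
          = ⋂ j, {p : (Fin q → ℝ) × (Fin m → ℝ) | 0 ≤ p.2 j} := by
        ext p; simp [Set.mem_iInter]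
      rw [hs]
      exact isClosed_iInter fun j => isClosed_le continuous_const
        ((continuous_apply j).comp continuous_snd)
    have h3 : IsClosed {p : (Fin q → ℝ) × (Fin m → ℝ) | ∑ j, p.1 j + ∑ j, p.2 j ≤ 1} :=
      isClosed_le (Continuous.add
        (continuous_finset_sum _ fun i _ => (continuous_apply i).comp continuous_fst)
        (continuous_finset_sum _ fun i _ => (continuous_apply i).comp continuous_snd))
        continuous_const
    have hs : P = {p : (Fin q → ℝ) × (Fin m → ℝ) | ∀ j, 0 ≤ p.1 j}
        ∩ ({p : (Fin q → ℝ) × (Fin m → ℝ) | ∀ j, 0 ≤ p.2 j}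
          ∩ {p : (Fin q → ℝ) × (Fin m → ℝ) | ∑ j, p.1 j + ∑ j, p.2 j ≤ 1}) := by
      ext p; simp only [hP, Set.mem_setOf_eq, Set.mem_inter_iff]
    rw [hs]
    exact h1.inter (h2.inter h3)
  have hPm : MeasurableSet P := hPclosed.measurableSet
  have hPc : IsCompact P := by
    refine IsCompact.of_isClosed_subset (isCompact_Icc
      (a := ((0 : Fin q → ℝ), (0 : Fin m → ℝ)))
      (b := ((fun _ => 1 : Fin q → ℝ), (fun _ => 1 : Fin m → ℝ)))) hPclosed ?_
    rintro p ⟨h1, h2, h3⟩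
    have hs1 : (0:ℝ) ≤ ∑ j, p.1 j := Finset.sum_nonneg fun j _ => h1 j
    have hs2 : (0:ℝ) ≤ ∑ j, p.2 j := Finset.sum_nonneg fun j _ => h2 j
    constructor
    · exact ⟨fun j => h1 j, fun j => h2 j⟩
    · constructor
      · intro j
        have : p.1 j ≤ ∑ i, p.1 i := Finset.single_le_sum (fun i _ => h1 i) (Finset.mem_univ j)
        simpa using by linarith
      · intro j
        have : p.2 j ≤ ∑ i, p.2 i := Finset.single_le_sum (fun i _ => h2 i) (Finset.mem_univ j)
        simpa using by linarith
  -- transfer integral to the product side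
  rw [← hmp.setIntegral_preimage_emb (MeasurableEquiv.measurableEmbedding e)
      (fun σ => f (fun j => R * σ (Fin.castLE hqn j))) (S (q+m) 1), hpre]
  simp_rw [hcast]
  have hint : IntegrableOn (fun p : (Fin q → ℝ) × (Fin m → ℝ) => f (fun j => R * p.1 j))
      P volume :=
    (Continuous.continuousOn (hf.comp (by fun_prop))).integrableOn_compact hPc
  have hint' : Integrable (Set.indicator P (fun p : (Fin q → ℝ) × (Fin m → ℝ) =>
      f (fun j => R * p.1 j))) (volume.prod volume) := by
    rw [← Measure.volume_eq_prod]
    exact (integrable_indicator_iff hPm).mpr hint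
  rw [← integral_indicator hPm, Measure.volume_eq_prod, integral_prod _ hint']
  have hinner : ∀ x : Fin q → ℝ,
      (∫ y, Set.indicator P (fun p : (Fin q → ℝ) × (Fin m → ℝ) =>
          f (fun j => R * p.1 j)) (x, y))
        = Set.indicator (S q 1)
            (fun x => (((1 - ∑ j, x j) ^ m / m.factorial : ℝ)) • f (fun j => R * x j)) x := by
    intro x
    by_cases hx0 : ∀ j, 0 ≤ x j
    · have hQ : (fun y => Set.indicator P (fun p : (Fin q → ℝ) × (Fin m → ℝ) =>
          f (fun j => R * p.1 j)) (x, y))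
          = fun y => Set.indicator (S m (1 - ∑ j, x j))
              (fun _ => f (fun j => R * x j)) y := by
        funext y
        by_cases hy : y ∈ S m (1 - ∑ j, x j)
        · rw [Set.indicator_of_mem hy, Set.indicator_of_mem]
          exact ⟨hx0, hy.1, by have := hy.2; linarith⟩
        · rw [Set.indicator_of_notMem hy, Set.indicator_of_notMem]
          intro hmem
          exact hy ⟨hmem.2.1, by have := hmem.2.2; linarith⟩
      rw [hQ, integral_indicator_const _ (measurableSet_S m _)]
      by_cases hx1 : ∑ j, x j ≤ 1
      · rw [measureReal_def, volume_S m (by linarith : (0:ℝ) ≤ 1 - ∑ j, x j),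
          Set.indicator_of_mem (show x ∈ S q 1 from ⟨hx0, hx1⟩),
          ENNReal.toReal_ofReal (div_nonneg (pow_nonneg (by linarith) _) (by positivity))]
      · rw [S_empty (by linarith : (1:ℝ) - ∑ j, x j < 0),
          Set.indicator_of_notMem (fun hmem => hx1 hmem.2)]
        simp
    · have hQ : (fun y => Set.indicator P (fun p : (Fin q → ℝ) × (Fin m → ℝ) =>
          f (fun j => R * p.1 j)) (x, y)) = fun _ => (0 : ℂ) := by
        funext y
        exact Set.indicator_of_notMem (fun hmem => hx0 hmem.1) _
      rw [hQ, Set.indicator_of_notMem (fun hmem : x ∈ S q 1 => hx0 hmem.1)]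
      simp
  simp_rw [hinner]
  rw [integral_indicator (measurableSet_S q 1)]

end Stmt7Aux

/-- Change-of-variables identity: for `f : ℝ^q → ℂ` continuous and rapidly
decreasing on the positive orthant, `1 ≤ q ≤ n` and `t > 0`,
`t^{2q} ∫_{Δ_n} f(t²σ₁,…,t²σ_q) dσ
  = (1/(n−q)!) ∫_{T(t²)} (1 − t^{−2}(u₁+⋯+u_q))^{n−q} f(u) du`,
where `T(c) = {u ∈ ℝ^q : u_j ≥ 0, u₁+⋯+u_q ≤ c}`. -/
theorem stmt7 (n q : ℕ) (hq : 1 ≤ q) (hqn : q ≤ n) (t : ℝ) (ht : 0 < t)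
    (f : (Fin q → ℝ) → ℂ) (hf : Continuous f)
    (hdec : ∀ N : ℕ, ∃ C : ℝ, 0 ≤ C ∧ ∀ u : Fin q → ℝ, (∀ j, 0 ≤ u j) →
      ‖f u‖ ≤ C / (1 + ‖u‖) ^ N) :
    (t ^ (2 * q)) •
      ∫ σ in {σ : Fin n → ℝ | (∀ j, 0 ≤ σ j) ∧ ∑ j, σ j ≤ 1},
        f (fun j => t ^ 2 * σ (Fin.castLE hqn j))
    = (((n - q).factorial : ℝ))⁻¹ •
        ∫ u in {u : Fin q → ℝ | (∀ j, 0 ≤ u j) ∧ ∑ j, u j ≤ t ^ 2},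
          ((1 - (t ^ 2)⁻¹ * ∑ j, u j) ^ (n - q)) • f u := by
  obtain ⟨m, rfl⟩ : ∃ m, n = q + m := ⟨n - q, by omega⟩
  have hmq : q + m - q = m := by omega
  rw [hmq]
  have hR : (0:ℝ) < t ^ 2 := by positivity
  show (t ^ (2 * q)) •
      ∫ σ in Stmt7Aux.S (q + m) 1, f (fun j => t ^ 2 * σ (Fin.castLE hqn j))
    = ((m.factorial : ℝ))⁻¹ •
        ∫ u in Stmt7Aux.S q (t ^ 2), ((1 - (t ^ 2)⁻¹ * ∑ j, u j) ^ m : ℝ) • f u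
  rw [Stmt7Aux.stepA q m hqn (t ^ 2) f hf]
  have hfun : ∀ x : Fin q → ℝ,
      (((1 - ∑ j, x j) ^ m / m.factorial : ℝ)) • f (fun j => t ^ 2 * x j)
      = (fun u : Fin q → ℝ =>
          (((1 - (t ^ 2)⁻¹ * ∑ j, u j) ^ m / m.factorial : ℝ)) • f u) ((t ^ 2) • x) := by
    intro x
    have h1 : (t ^ 2) • x = fun j => t ^ 2 * x j := rfl
    simp only [h1]
    congr 3
    rw [← Finset.mul_sum]
    field_simp
  have hset : (t ^ 2) • Stmt7Aux.S q 1 = Stmt7Aux.S q (t ^ 2) := by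
    ext u
    rw [Set.mem_smul_set_iff_inv_smul_mem₀ (ne_of_gt hR)]
    constructor
    · rintro ⟨h1, h2⟩
      refine ⟨fun j => ?_, ?_⟩
      · have h3 := mul_nonneg hR.le (h1 j)
        have h4 : t ^ 2 * ((t ^ 2)⁻¹ • u) j = u j := by
          simp [mul_inv_cancel_left₀ (ne_of_gt hR)]
        rwa [h4] at h3
      · have h5 : ∑ j, ((t ^ 2)⁻¹ • u) j = (t ^ 2)⁻¹ * ∑ j, u j := by
          simp [Finset.mul_sum]
        rw [h5] at h2
        have := (inv_mul_le_iff₀ hR).mp h2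
        linarith
    · rintro ⟨h1, h2⟩
      refine ⟨fun j => ?_, ?_⟩
      · have h6 : ((t ^ 2)⁻¹ • u) j = (t ^ 2)⁻¹ * u j := rfl
        rw [h6]
        have := h1 j
        positivity
      · have h5 : ∑ j, ((t ^ 2)⁻¹ • u) j = (t ^ 2)⁻¹ * ∑ j, u j := by
          simp [Finset.mul_sum]
        rw [h5, inv_mul_le_iff₀ hR]
        linarith
  have hI : (∫ x in Stmt7Aux.S q 1,
        (((1 - ∑ j, x j) ^ m / m.factorial : ℝ)) • f (fun j => t ^ 2 * x j))
      = ((t ^ 2) ^ q)⁻¹ • ∫ u in Stmt7Aux.S q (t ^ 2),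
          (((1 - (t ^ 2)⁻¹ * ∑ j, u j) ^ m / m.factorial : ℝ)) • f u := by
    have h := MeasureTheory.Measure.setIntegral_comp_smul_of_pos volume
      (fun u : Fin q → ℝ => (((1 - (t ^ 2)⁻¹ * ∑ j, u j) ^ m / m.factorial : ℝ)) • f u)
      (Stmt7Aux.S q 1) hR
    rw [Module.finrank_fin_fun, hset] at h
    rw [← h]
    exact integral_congr_ae (Filter.Eventually.of_forall fun x => hfun x)
  rw [hI, smul_smul, pow_mul, mul_inv_cancel₀ (ne_of_gt (pow_pos hR q)), one_smul]
  rw [← MeasureTheory.integral_smul]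
  congr 1
  funext u
  rw [smul_smul]
  congr 1
  rw [div_eq_inv_mul]
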